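/- Let b > 0 be a real constant. There exists R > 0 such that for every complex number w with Re(w) > 0 and |w| = r ≥ R, the equation λ + b·log λ − w = 0 (with the principal branch of log, arg λ ∈ (−π, π)) has exactly one solution λ in the open disk |λ − w| < r/2. -/

import Mathlib

open Complex Metric

theorem stmt0 (b : ℝ) (hb : 0 < b) :
    ∃ R > (0:ℝ), ∀ w : ℂ, 0 < w.re → R ≤ ‖w‖ →
      ∃! l : ℂ, ‖l - w‖ < ‖w‖ / 2 ∧
        l + (b : ℂ) * Complex.log l - w = 0 := by
  refine ⟨max (4*b) ((10*b+2)^2), lt_max_of_lt_right (by positivity), ?_⟩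
  intro w hw hR
  set r := ‖w‖ with hrdef
  have hr4b : 4*b ≤ r := le_trans (le_max_left _ _) hR
  have hrM : (10*b+2)^2 ≤ r := le_trans (le_max_right _ _) hR
  have hsr : 10*b+2 ≤ Real.sqrt r := by
    rw [show (10*b+2 : ℝ) = Real.sqrt ((10*b+2)^2) from
      (Real.sqrt_sq (by linarith)).symm]
    exact Real.sqrt_le_sqrt hrM
  have hr0 : (0:ℝ) < r := by nlinarith
  have hr4 : (4:ℝ) ≤ r := by nlinarith [Real.sq_sqrt hr0.le, Real.sqrt_nonneg r]
  set S := Metric.closedBall w (r/2) with hSdef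
  -- basic facts about points in S
  have habs_mem : ∀ l ∈ S, r/2 ≤ ‖l‖ ∧ ‖l‖ ≤ 3*r/2 := by
    intro l hl
    rw [hSdef, Metric.mem_closedBall, Complex.dist_eq] at hl
    constructor
    · have := norm_add_le (w - l) l
      rw [sub_add_cancel, show w - l = -(l-w) by ring, norm_neg] at this
      linarith
    · have := norm_add_le (l - w) w
      rw [sub_add_cancel] at this
      linarith
  have hslit : ∀ l ∈ S, l ∈ Complex.slitPlane := by
    intro l hl
    rw [Complex.mem_slitPlane_iff]
    by_contra h
    push_neg at h
    obtain ⟨h1, h2⟩ := h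
    rw [hSdef, Metric.mem_closedBall, Complex.dist_eq] at hl
    have h3 : (‖l - w‖)^2 = (l.re - w.re)^2 + (l.im - w.im)^2 := by
      rw [Complex.sq_norm, Complex.normSq_apply, Complex.sub_re, Complex.sub_im]; ring
    have h4 : r^2 = w.re^2 + w.im^2 := by
      rw [hrdef, Complex.sq_norm, Complex.normSq_apply]; ring
    have h5 : (l.re - w.re)^2 ≥ w.re^2 := by nlinarith
    have : (‖l - w‖)^2 ≥ r^2 := by rw [h3, h4, h2]; nlinarith
    nlinarith [norm_nonneg (l - w)]
  -- bound on |log l| for l ∈ S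
  have hlogbd : ∀ l ∈ S, ‖Complex.log l‖ ≤ Real.log (3*r/2) + Real.pi := by
    intro l hl
    obtain ⟨hl1, hl2⟩ := habs_mem l hl
    have h1 : ‖Complex.log l‖ ≤ |(Complex.log l).re| + |(Complex.log l).im| :=
      Complex.norm_le_abs_re_add_abs_im _
    rw [Complex.log_re, Complex.log_im] at h1
    have h2 : |l.arg| ≤ Real.pi := Complex.abs_arg_le_pi l
    have h3 : |Real.log (‖l‖)| ≤ Real.log (3*r/2) := by
      rw [abs_le]
      constructor
      · have : (0:ℝ) ≤ Real.log (‖l‖) := by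
          apply Real.log_nonneg; linarith
        have : (0:ℝ) ≤ Real.log (3*r/2) := Real.log_nonneg (by linarith)
        linarith [Real.log_nonneg (show (1:ℝ) ≤ ‖l‖ by linarith)]
      · exact Real.log_le_log (by linarith) (by linarith)
    linarith
  -- key numeric bound
  have hkey : b * (Real.log (3*r/2) + Real.pi) < r/2 := by
    have hs0 : (0:ℝ) < Real.sqrt r := by
      have := Real.sqrt_nonneg r; nlinarith
    have ht0 : (0:ℝ) < Real.sqrt (3*r/2) := Real.sqrt_pos.mpr (by linarith)
    have hlog2 : Real.log (3*r/2) = 2 * Real.log (Real.sqrt (3*r/2)) := by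
      rw [Real.log_sqrt (by linarith)]; ring
    have hlog3 : Real.log (Real.sqrt (3*r/2)) ≤ Real.sqrt (3*r/2) - 1 :=
      Real.log_le_sub_one_of_pos ht0
    have hts : Real.sqrt (3*r/2) ≤ (3/2) * Real.sqrt r := by
      nlinarith [Real.sq_sqrt (show (0:ℝ) ≤ 3*r/2 by linarith),
        Real.sq_sqrt hr0.le, Real.sqrt_nonneg r, Real.sqrt_nonneg (3*r/2)]
    have hpi : Real.pi ≤ 4 := Real.pi_le_four
    have hlogr : Real.log (3*r/2) ≤ 3 * Real.sqrt r := by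
      rw [hlog2]; nlinarith
    nlinarith [Real.sq_sqrt hr0.le, mul_le_mul_of_nonneg_left hlogr hb.le,
      mul_le_mul_of_nonneg_left hpi hb.le,
      mul_le_mul_of_nonneg_left hsr (mul_pos hb hs0).le]
  -- Lipschitz bound for log on S
  have hlip : ∀ l1 ∈ S, ∀ l2 ∈ S,
      ‖Complex.log l1 - Complex.log l2‖ ≤ (2/r) * ‖l1 - l2‖ := by
    intro l1 h1 l2 h2
    have := Convex.norm_image_sub_le_of_norm_hasDerivWithin_le
      (f := Complex.log) (f' := fun z => z⁻¹) (s := S) (C := 2/r)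
      (fun x hx => (Complex.hasDerivAt_log (hslit x hx)).hasDerivWithinAt)
      (fun x hx => by
        obtain ⟨hx1, _⟩ := habs_mem x hx
        rw [norm_inv]
        rw [inv_le_comm₀ (by nlinarith [norm_nonneg x]) (by positivity), inv_div]
        linarith)
      (convex_closedBall w (r/2)) h2 h1
    simpa using this
  -- the contraction map
  set g : ℂ → ℂ := fun z => w - (b : ℂ) * Complex.log z with hgdef
  have hgdist : ∀ l ∈ S, ‖g l - w‖ < r / 2 := by
    intro l hl
    have : g l - w = -((b:ℂ) * Complex.log l) := by rw [hgdef]; ring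
    rw [this, norm_neg, norm_mul, Complex.norm_real, Real.norm_eq_abs, abs_of_pos hb]
    calc b * ‖Complex.log l‖ ≤ b * (Real.log (3*r/2) + Real.pi) :=
          mul_le_mul_of_nonneg_left (hlogbd l hl) hb.le
    _ < r/2 := hkey
  have hgmem : ∀ l ∈ S, g l ∈ S := by
    intro l hl
    rw [hSdef, Metric.mem_closedBall, Complex.dist_eq]
    exact (hgdist l hl).le
  have hgcontr : ∀ l1 ∈ S, ∀ l2 ∈ S,
      ‖g l1 - g l2‖ ≤ (1/2) * ‖l1 - l2‖ := by
    intro l1 h1 l2 h2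
    have he : g l1 - g l2 = -((b:ℂ) * (Complex.log l1 - Complex.log l2)) := by
      rw [hgdef]; ring
    rw [he, norm_neg, norm_mul, Complex.norm_real, Real.norm_eq_abs, abs_of_pos hb]
    calc b * ‖Complex.log l1 - Complex.log l2‖
        ≤ b * ((2/r) * ‖l1 - l2‖) :=
          mul_le_mul_of_nonneg_left (hlip l1 h1 l2 h2) hb.le
    _ ≤ (1/2) * ‖l1 - l2‖ := by
        have h4 : b * (2/r) ≤ 1/2 := by
          rw [show b * (2/r) = (2*b)/r by ring, div_le_iff₀ hr0]
          linarith
        nlinarith [norm_nonneg (l1 - l2)]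
  -- set up the fixed point on the subtype
  haveI : Nonempty S := ⟨⟨w, Metric.mem_closedBall_self (by positivity)⟩⟩
  haveI : CompleteSpace S := Metric.isClosed_closedBall.completeSpace_coe
  set F : S → S := fun x => ⟨g x.1, hgmem x.1 x.2⟩ with hFdef
  have hF : ContractingWith (1/2 : NNReal) F := by
    constructor
    · rw [← NNReal.coe_lt_coe]; norm_num
    · apply LipschitzWith.of_dist_le_mul
      intro x y
      rw [Subtype.dist_eq, Subtype.dist_eq, Complex.dist_eq, Complex.dist_eq,
        show ((1/2 : NNReal) : ℝ) = 1/2 by norm_num]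
      exact hgcontr x.1 x.2 y.1 y.2
  set p := hF.fixedPoint F with hpdef
  have hfix : g p.1 = p.1 := congrArg Subtype.val (hF.fixedPoint_isFixedPt)
  have hlogp : (p:ℂ) ≠ 0 := Complex.slitPlane_ne_zero (hslit p.1 p.2)
  refine ⟨p.1, ⟨?_, ?_⟩, ?_⟩
  · rw [← hfix]; exact hgdist p.1 p.2
  · rw [hgdef] at hfix; linear_combination -hfix
  · intro y hy
    obtain ⟨hy1, hy2⟩ := hy
    have hyS : y ∈ S := by
      rw [hSdef, Metric.mem_closedBall, Complex.dist_eq]; exact hy1.le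
    have hyfix : g y = y := by rw [hgdef]; linear_combination -hy2
    have := hgcontr y hyS p.1 p.2
    rw [hyfix, hfix] at this
    have h0 : ‖y - p.1‖ ≤ 0 := by linarith
    have := norm_nonneg (y - p.1)
    have : ‖y - p.1‖ = 0 := le_antisymm h0 this
    have := norm_eq_zero.mp this
    exact sub_eq_zero.mp this
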